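/- arXiv:1909.10942 — 3 statements merged into one kernel-verified Lean document; each statement's English description precedes it below -/
import Mathlib

section
/- Let A = (a_{i₁…i_{k+p}}) ∈ ℝ^{n₁×⋯×n_{k+p}} and B = (b_{i_{k+1}…i_{k+p+q}}) ∈ ℝ^{n_{k+1}×⋯×n_{k+p+q}}, and define their contraction product C ∈ ℝ^{n₁×⋯×n_k×n_{k+p+1}×⋯×n_{k+p+q}} by summing over the shared p indices: c_{i₁…i_k i_{k+p+1}…i_{k+p+q}} = Σ a_{i₁…i_{k+p}} b_{i_{k+1}…i_{k+p+q}}. Then ‖C‖_* ≤ ‖A‖_* · ‖B‖_*, where ‖·‖_* is the tensor nuclear norm. -/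
open Finset

/-- The nuclear norm of a real tensor `T` indexed by `∀ i : ι, Fin (n i)`:
the infimum of `∑ |λ_j|` over all decompositions of `T` into rank-one tensors
with unit-norm factors. -/
noncomputable def tensorNuclearNorm {ι : Type} [Fintype ι] [DecidableEq ι] {n : ι → ℕ}
    (T : (∀ i, Fin (n i)) → ℝ) : ℝ :=
  sInf { s | ∃ (r : ℕ) (lam : Fin r → ℝ)
      (u : Fin r → ∀ i : ι, EuclideanSpace ℝ (Fin (n i))),
      (∀ j i, ‖u j i‖ = 1) ∧
      (∀ x, T x = ∑ j, lam j * ∏ i, u j i (x i)) ∧ s = ∑ j, |lam j| }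

/-- The spectral norm of a real tensor: the supremum of the inner product of
`T` with rank-one tensors built from unit vectors. -/
noncomputable def tensorSpectralNorm {ι : Type} [Fintype ι] [DecidableEq ι] {n : ι → ℕ}
    (T : (∀ i, Fin (n i)) → ℝ) : ℝ :=
  sSup { s | ∃ u : ∀ i : ι, EuclideanSpace ℝ (Fin (n i)),
      (∀ i, ‖u i‖ = 1) ∧ s = ∑ x, T x * ∏ i, u i (x i) }

/-- Every tensor admits at least one rank-one decomposition. -/
lemma tnn_set_nonempty {ι : Type} [Fintype ι] [DecidableEq ι] {n : ι → ℕ}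
    (T : (∀ i, Fin (n i)) → ℝ) :
    { s | ∃ (r : ℕ) (lam : Fin r → ℝ)
      (u : Fin r → ∀ i : ι, EuclideanSpace ℝ (Fin (n i))),
      (∀ j i, ‖u j i‖ = 1) ∧
      (∀ x, T x = ∑ j, lam j * ∏ i, u j i (x i)) ∧ s = ∑ j, |lam j| }.Nonempty := by
  classical
  by_cases h : Nonempty (∀ i, Fin (n i))
  · let e : Fin (Fintype.card (∀ i, Fin (n i))) ≃ (∀ i, Fin (n i)) :=
      (Fintype.equivFin _).symm
    refine ⟨∑ j, |T (e j)|, Fintype.card (∀ i, Fin (n i)), fun j => T (e j),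
      fun j i => EuclideanSpace.single ((e j) i) 1,
      fun j i => by simp [EuclideanSpace.norm_single], ?_, rfl⟩
    intro x
    have key : ∀ y : ∀ i, Fin (n i), (∏ i, if x i = y i then (1:ℝ) else 0)
        = if y = x then 1 else 0 := by
      intro y
      by_cases hxy : y = x
      · subst hxy; simp
      · obtain ⟨i, hi⟩ := Function.ne_iff.mp hxy
        rw [if_neg hxy]
        exact Finset.prod_eq_zero (Finset.mem_univ i) (if_neg (fun h' => hi h'.symm))
    have hcomp := Equiv.sum_comp e.symm
      (fun j => T (e j) * ∏ i, (EuclideanSpace.single ((e j) i) (1:ℝ)) (x i))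
    calc T x = ∑ y : ∀ i, Fin (n i), T y * ∏ i, (EuclideanSpace.single (y i) (1:ℝ)) (x i) := by
              simp only [EuclideanSpace.single_apply, key, mul_ite, mul_one, mul_zero,
                Finset.sum_ite_eq', Finset.mem_univ, if_true]
      _ = ∑ j, T (e j) * ∏ i, (EuclideanSpace.single ((e j) i) (1:ℝ)) (x i) := by
              rw [← hcomp]; simp
  · exact ⟨0, 0, 0, fun j => j.elim0, fun j => j.elim0, fun x => (h ⟨x⟩).elim, by simp⟩

/-- Interchange of a sum over a product index set with products. -/
lemma sum_prod_pi {ι : Type} [Fintype ι] [DecidableEq ι] {n : ι → ℕ}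
    (g : ∀ i, Fin (n i) → ℝ) :
    ∑ y : ∀ i, Fin (n i), ∏ i, g i (y i) = ∏ i, ∑ t, g i t :=
  (Fintype.prod_sum g).symm

/-- The nuclear norm of the contraction product of two tensors over `p` shared
modes is at most the product of their nuclear norms. Tensor `A` has modes
`Fin k ⊕ Fin p`, tensor `B` has modes `Fin p ⊕ Fin q`, and their contraction
product `C` has modes `Fin k ⊕ Fin q`. -/
theorem tensorNuclearNorm_contraction_le {k p q : ℕ}
    {n₁ : Fin k → ℕ} {n₂ : Fin p → ℕ} {n₃ : Fin q → ℕ}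
    (A : (∀ i : Fin k ⊕ Fin p, Fin (Sum.elim n₁ n₂ i)) → ℝ)
    (B : (∀ i : Fin p ⊕ Fin q, Fin (Sum.elim n₂ n₃ i)) → ℝ)
    (C : (∀ i : Fin k ⊕ Fin q, Fin (Sum.elim n₁ n₃ i)) → ℝ)
    (hC : ∀ (x : ∀ i : Fin k, Fin (n₁ i)) (z : ∀ i : Fin q, Fin (n₃ i)),
      C (fun i => Sum.rec (motive := fun i => Fin (Sum.elim n₁ n₃ i)) x z i) =
        ∑ y : ∀ i : Fin p, Fin (n₂ i),
          A (fun i => Sum.rec (motive := fun i => Fin (Sum.elim n₁ n₂ i)) x y i) *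
          B (fun i => Sum.rec (motive := fun i => Fin (Sum.elim n₂ n₃ i)) y z i)) :
    tensorNuclearNorm C ≤ tensorNuclearNorm A * tensorNuclearNorm B := by
  classical
  set SA := { s | ∃ (r : ℕ) (lam : Fin r → ℝ)
      (u : Fin r → ∀ i : Fin k ⊕ Fin p, EuclideanSpace ℝ (Fin (Sum.elim n₁ n₂ i))),
      (∀ j i, ‖u j i‖ = 1) ∧
      (∀ x, A x = ∑ j, lam j * ∏ i, u j i (x i)) ∧ s = ∑ j, |lam j| } with hSA
  set SB := { s | ∃ (r : ℕ) (lam : Fin r → ℝ)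
      (u : Fin r → ∀ i : Fin p ⊕ Fin q, EuclideanSpace ℝ (Fin (Sum.elim n₂ n₃ i))),
      (∀ j i, ‖u j i‖ = 1) ∧
      (∀ x, B x = ∑ j, lam j * ∏ i, u j i (x i)) ∧ s = ∑ j, |lam j| } with hSB
  set SC := { s | ∃ (r : ℕ) (lam : Fin r → ℝ)
      (u : Fin r → ∀ i : Fin k ⊕ Fin q, EuclideanSpace ℝ (Fin (Sum.elim n₁ n₃ i))),
      (∀ j i, ‖u j i‖ = 1) ∧
      (∀ x, C x = ∑ j, lam j * ∏ i, u j i (x i)) ∧ s = ∑ j, |lam j| } with hSC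
  have hbddC : BddBelow SC := by
    refine ⟨0, ?_⟩
    rintro s ⟨r, lam, u, -, -, rfl⟩
    exact Finset.sum_nonneg fun j _ => abs_nonneg _
  -- key step: for any decompositions of A and B we get a bound on the nuclear norm of C
  have key : ∀ a ∈ SA, ∀ b ∈ SB, tensorNuclearNorm C ≤ a * b := by
    rintro a ha b hb
    obtain ⟨rA, lamA, uA, huA, hA, rfl⟩ := ha
    obtain ⟨rB, lamB, uB, huB, hB, rfl⟩ := hb
    set E := (finProdFinEquiv : Fin rA × Fin rB ≃ Fin (rA * rB)) with hE
    set c : Fin rA × Fin rB → ℝ :=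
      fun jm => ∏ i : Fin p, ∑ t, uA jm.1 (Sum.inr i) t * uB jm.2 (Sum.inl i) t with hc
    set lam' : Fin (rA * rB) → ℝ :=
      fun j' => lamA (E.symm j').1 * lamB (E.symm j').2 * c (E.symm j') with hlam'
    set u' : Fin (rA * rB) → ∀ i : Fin k ⊕ Fin q, EuclideanSpace ℝ (Fin (Sum.elim n₁ n₃ i)) :=
      fun j' i => Sum.rec (motive := fun i => EuclideanSpace ℝ (Fin (Sum.elim n₁ n₃ i)))
        (fun a => uA (E.symm j').1 (Sum.inl a))
        (fun b => uB (E.symm j').2 (Sum.inr b)) i with hu'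
    have hu'norm : ∀ j' i, ‖u' j' i‖ = 1 := by
      intro j' i
      rcases i with a | b
      · exact huA _ _
      · exact huB _ _
    have hCdec : ∀ xz, C xz = ∑ j', lam' j' * ∏ i, u' j' i (xz i) := by
      intro xz
      set x : ∀ i : Fin k, Fin (n₁ i) := fun a => xz (Sum.inl a) with hx
      set z : ∀ i : Fin q, Fin (n₃ i) := fun b => xz (Sum.inr b) with hz
      have hxz : xz = fun i => Sum.rec (motive := fun i => Fin (Sum.elim n₁ n₃ i)) x z i := by
        funext i; rcases i with a | b <;> rfl
      rw [hxz, hC x z]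
      -- expand the decompositions of A and B
      have step1 : ∀ y : ∀ i : Fin p, Fin (n₂ i),
          A (fun i => Sum.rec (motive := fun i => Fin (Sum.elim n₁ n₂ i)) x y i) *
          B (fun i => Sum.rec (motive := fun i => Fin (Sum.elim n₂ n₃ i)) y z i)
          = ∑ jm : Fin rA × Fin rB,
              (lamA jm.1 * ((∏ a, uA jm.1 (Sum.inl a) (x a)) * ∏ i, uA jm.1 (Sum.inr i) (y i))) *
              (lamB jm.2 * ((∏ i, uB jm.2 (Sum.inl i) (y i)) * ∏ b, uB jm.2 (Sum.inr b) (z b))) := by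
        intro y
        rw [hA, hB, Finset.sum_mul_sum, Fintype.sum_prod_type]
        refine Finset.sum_congr rfl fun j _ => Finset.sum_congr rfl fun m _ => ?_
        rw [Fintype.prod_sum_type, Fintype.prod_sum_type]
      rw [Finset.sum_congr rfl fun y _ => step1 y, Finset.sum_comm]
      rw [← Equiv.sum_comp E (fun j' => lam' j' * ∏ i, u' j' i
        ((fun i => Sum.rec (motive := fun i => Fin (Sum.elim n₁ n₃ i)) x z i) i))]
      refine Finset.sum_congr rfl fun jm _ => ?_
      have hprod : (∏ i : Fin k ⊕ Fin q, u' (E jm) i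
          ((fun i => Sum.rec (motive := fun i => Fin (Sum.elim n₁ n₃ i)) x z i) i))
          = (∏ a, uA (E.symm (E jm)).1 (Sum.inl a) (x a)) *
            ∏ b, uB (E.symm (E jm)).2 (Sum.inr b) (z b) := by
        rw [Fintype.prod_sum_type]
      rw [hprod, hlam']
      simp only [Equiv.symm_apply_apply]
      have hsum : ∑ y : ∀ i : Fin p, Fin (n₂ i),
          (∏ i, uA jm.1 (Sum.inr i) (y i)) * (∏ i, uB jm.2 (Sum.inl i) (y i)) = c jm :=
        calc ∑ y : ∀ i : Fin p, Fin (n₂ i),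
            (∏ i, uA jm.1 (Sum.inr i) (y i)) * (∏ i, uB jm.2 (Sum.inl i) (y i))
            = ∑ y : ∀ i : Fin p, Fin (n₂ i),
              ∏ i, (uA jm.1 (Sum.inr i) (y i) * uB jm.2 (Sum.inl i) (y i)) :=
              Finset.sum_congr rfl fun y _ => (Finset.prod_mul_distrib).symm
          _ = ∏ i : Fin p, ∑ t : Fin (n₂ i), uA jm.1 (Sum.inr i) t * uB jm.2 (Sum.inl i) t :=
              sum_prod_pi (n := n₂) (fun i t => uA jm.1 (Sum.inr i) t * uB jm.2 (Sum.inl i) t)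
          _ = c jm := rfl
      calc ∑ y : ∀ i : Fin p, Fin (n₂ i),
            (lamA jm.1 * ((∏ a, uA jm.1 (Sum.inl a) (x a)) * ∏ i, uA jm.1 (Sum.inr i) (y i))) *
            (lamB jm.2 * ((∏ i, uB jm.2 (Sum.inl i) (y i)) * ∏ b, uB jm.2 (Sum.inr b) (z b)))
          = ∑ y : ∀ i : Fin p, Fin (n₂ i),
            (lamA jm.1 * lamB jm.2 * ((∏ a, uA jm.1 (Sum.inl a) (x a)) *
              ∏ b, uB jm.2 (Sum.inr b) (z b))) *
            ((∏ i, uA jm.1 (Sum.inr i) (y i)) * (∏ i, uB jm.2 (Sum.inl i) (y i))) := by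
            refine Finset.sum_congr rfl fun y _ => by ring
        _ = (lamA jm.1 * lamB jm.2 * ((∏ a, uA jm.1 (Sum.inl a) (x a)) *
              ∏ b, uB jm.2 (Sum.inr b) (z b))) * c jm := by
            rw [← Finset.mul_sum, hsum]
        _ = lamA jm.1 * lamB jm.2 * c jm *
            ((∏ a, uA jm.1 (Sum.inl a) (x a)) * ∏ b, uB jm.2 (Sum.inr b) (z b)) := by ring
    have hmem : (∑ j', |lam' j'|) ∈ SC := ⟨rA * rB, lam', u', hu'norm, hCdec, rfl⟩
    have h1 : tensorNuclearNorm C ≤ ∑ j', |lam' j'| := csInf_le hbddC hmem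
    have hcle : ∀ jm : Fin rA × Fin rB, |c jm| ≤ 1 := by
      intro jm
      rw [hc, Finset.abs_prod]
      refine Finset.prod_le_one (fun i _ => abs_nonneg _) fun i _ => ?_
      have hinner : (inner ℝ (uA jm.1 (Sum.inr i)) (uB jm.2 (Sum.inl i)) : ℝ)
          = ∑ t, uA jm.1 (Sum.inr i) t * uB jm.2 (Sum.inl i) t := by
        erw [PiLp.inner_apply]; simp [RCLike.inner_apply, conj_trivial, mul_comm]
      calc |∑ t, uA jm.1 (Sum.inr i) t * uB jm.2 (Sum.inl i) t|
          = |(inner ℝ (uA jm.1 (Sum.inr i)) (uB jm.2 (Sum.inl i)) : ℝ)| := by rw [hinner]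
        _ ≤ ‖uA jm.1 (Sum.inr i)‖ * ‖uB jm.2 (Sum.inl i)‖ := abs_real_inner_le_norm _ _
        _ = 1 := by rw [huA, huB, one_mul]
    have h2 : (∑ j', |lam' j'|) ≤ (∑ j, |lamA j|) * (∑ m, |lamB m|) := by
      rw [← Equiv.sum_comp E (fun j' => |lam' j'|)]
      have : ∀ jm : Fin rA × Fin rB, |lam' (E jm)| ≤ |lamA jm.1| * |lamB jm.2| := by
        intro jm
        rw [hlam']
        simp only [Equiv.symm_apply_apply]
        rw [abs_mul, abs_mul]
        calc |lamA jm.1| * |lamB jm.2| * |c jm|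
            ≤ |lamA jm.1| * |lamB jm.2| * 1 := by
              exact mul_le_mul_of_nonneg_left (hcle jm)
                (mul_nonneg (abs_nonneg _) (abs_nonneg _))
          _ = |lamA jm.1| * |lamB jm.2| := mul_one _
      calc ∑ jm : Fin rA × Fin rB, |lam' (E jm)|
          ≤ ∑ jm : Fin rA × Fin rB, |lamA jm.1| * |lamB jm.2| :=
            Finset.sum_le_sum fun jm _ => this jm
        _ = (∑ j, |lamA j|) * (∑ m, |lamB m|) := by
            rw [Fintype.sum_prod_type, Finset.sum_mul_sum]
    exact h1.trans h2
  -- assembly via an epsilon argument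
  have neA : SA.Nonempty := tnn_set_nonempty A
  have neB : SB.Nonempty := tnn_set_nonempty B
  have hA0 : ∀ a ∈ SA, 0 ≤ a := by
    rintro a ⟨r, lam, u, _, _, rfl⟩; exact Finset.sum_nonneg fun j _ => abs_nonneg _
  have hB0 : ∀ b ∈ SB, 0 ≤ b := by
    rintro b ⟨r, lam, u, _, _, rfl⟩; exact Finset.sum_nonneg fun j _ => abs_nonneg _
  have hAeq : tensorNuclearNorm A = sInf SA := rfl
  have hBeq : tensorNuclearNorm B = sInf SB := rfl
  have hα : 0 ≤ sInf SA := le_csInf neA hA0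
  have hβ : 0 ≤ sInf SB := le_csInf neB hB0
  have heps : ∀ ε : ℝ, 0 < ε → tensorNuclearNorm C ≤ (sInf SA + ε) * (sInf SB + ε) := by
    intro ε hε
    obtain ⟨a, ha, halt⟩ := Real.lt_sInf_add_pos neA hε
    obtain ⟨b, hb, hblt⟩ := Real.lt_sInf_add_pos neB hε
    calc tensorNuclearNorm C ≤ a * b := key a ha b hb
      _ ≤ (sInf SA + ε) * (sInf SB + ε) :=
        mul_le_mul halt.le hblt.le (hB0 b hb) (by positivity)
  rw [hAeq, hBeq]
  have hcont : Filter.Tendsto (fun ε : ℝ => (sInf SA + ε) * (sInf SB + ε))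
      (nhdsWithin 0 (Set.Ioi 0)) (nhds (sInf SA * sInf SB)) := by
    have hc2 : Filter.Tendsto (fun ε : ℝ => (sInf SA + ε) * (sInf SB + ε))
        (nhds 0) (nhds ((sInf SA + 0) * (sInf SB + 0))) := by
      exact (Continuous.mul (continuous_const.add continuous_id)
        (continuous_const.add continuous_id)).tendsto 0
    simpa using hc2.mono_left nhdsWithin_le_nhds
  exact ge_of_tendsto hcont (Filter.eventually_of_mem self_mem_nhdsWithin
    fun ε hε => heps ε hε)
end

section
/- Let A = (a_{ijk}) ∈ ℝ^{d×d×d} be symmetric, i.e., a_{ijk} is invariant under all permutations of (i,j,k). Then its cubic power A³ (with entries t_{ijk} = Σ_{s,p,q} a_{ipq} a_{sjq} a_{spk}) is also symmetric. -/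
open Finset

/-- The cubic power of a third order tensor:
`(A³)_{ijk} = ∑_{s,p,q} a_{ipq} a_{sjq} a_{spk}`. -/
def cubicPow {d₁ d₂ d₃ : ℕ} (A : Fin d₁ → Fin d₂ → Fin d₃ → ℝ) :
    Fin d₁ → Fin d₂ → Fin d₃ → ℝ :=
  fun i j k => ∑ s, ∑ p, ∑ q, A i p q * A s j q * A s p k

/-- The cubic power of a symmetric third order tensor is symmetric. -/
theorem cubicPow_symmetric {d : ℕ} (A : Fin d → Fin d → Fin d → ℝ)
    (hA : ∀ (σ : Equiv.Perm (Fin 3)) (v : Fin 3 → Fin d),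
      A (v (σ 0)) (v (σ 1)) (v (σ 2)) = A (v 0) (v 1) (v 2)) :
    ∀ (σ : Equiv.Perm (Fin 3)) (v : Fin 3 → Fin d),
      cubicPow A (v (σ 0)) (v (σ 1)) (v (σ 2)) = cubicPow A (v 0) (v 1) (v 2) := by
  have s12 : ∀ x y z, A x y z = A y x z := fun x y z => by
    have := hA (Equiv.swap 0 1) ![y, x, z]
    simpa [Equiv.swap_apply_def] using this
  have s23 : ∀ x y z, A x y z = A x z y := fun x y z => by
    have := hA (Equiv.swap 1 2) ![x, z, y]
    simpa [Equiv.swap_apply_def] using this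
  have h12 : ∀ x y z, cubicPow A x y z = cubicPow A y x z := by
    intro x y z
    unfold cubicPow
    rw [Finset.sum_comm]
    refine Finset.sum_congr rfl fun s _ => Finset.sum_congr rfl fun p _ =>
      Finset.sum_congr rfl fun q _ => ?_
    rw [s12 x s q, s12 p y q, s12 p s z]; ring
  have h23 : ∀ x y z, cubicPow A x y z = cubicPow A x z y := by
    intro x y z
    unfold cubicPow
    refine Finset.sum_congr rfl fun s _ => ?_
    rw [Finset.sum_comm]
    refine Finset.sum_congr rfl fun p _ => Finset.sum_congr rfl fun q _ => ?_
    rw [s23 x q p, s23 s y p, s23 s q z]; ring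
  have e1 : ∀ x y z, cubicPow A y z x = cubicPow A x y z :=
    fun x y z => (h23 y z x).trans (h12 y x z)
  have e2 : ∀ x y z, cubicPow A z x y = cubicPow A x y z :=
    fun x y z => (h12 z x y).trans (h23 x z y)
  have e3 : ∀ x y z, cubicPow A z y x = cubicPow A x y z :=
    fun x y z => ((h12 y z x).symm.trans (e1 x y z))
  intro σ v
  have hcases : ∀ x : Fin 3, x = 0 ∨ x = 1 ∨ x = 2 := by decide
  have hinj := σ.injective
  set T := cubicPow A with hT
  rcases hcases (σ 0) with h0 | h0 | h0 <;>
    rcases hcases (σ 1) with h1 | h1 | h1 <;>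
      rcases hcases (σ 2) with h2 | h2 | h2 <;>
        simp only [h0, h1, h2] <;>
        first
          | rfl
          | (exact absurd (hinj (h0.trans h1.symm)) (by decide))
          | (exact absurd (hinj (h0.trans h2.symm)) (by decide))
          | (exact absurd (hinj (h1.trans h2.symm)) (by decide))
          | (exact (h23 (v 0) (v 1) (v 2)).symm)
          | (exact (h12 (v 0) (v 1) (v 2)).symm)
          | (exact e1 (v 0) (v 1) (v 2))
          | (exact e2 (v 0) (v 1) (v 2))
          | (exact e3 (v 0) (v 1) (v 2))
end

section
/- Let ‖·‖ be a norm on ℝ^{d₁×d₂×d₃} satisfying ‖A³‖ ≤ ‖A‖³ for the cubic power. Then for any A, the sequence m ↦ ‖A^{3^m}‖^{1/3^m} is non-increasing, and hence converges (to its infimum, the Gelfand limit ρ(A)). Moreover, for any other norm ‖·‖′ on ℝ^{d₁×d₂×d₃}, the sequence (‖A^{3^m}‖′)^{1/3^m} converges to the same limit ρ(A). -/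
open Finset

set_option linter.unusedSectionVars false

section aux
variable {E : Type*} [NormedAddCommGroup E] [NormedSpace ℝ E] [FiniteDimensional ℝ E]
variable (N : E → ℝ)

lemma aux_zero (hs : ∀ (α : ℝ) x, N (α • x) = |α| * N x) : N 0 = 0 := by
  have := hs 0 0
  simpa using this

lemma aux_nonneg (hs : ∀ (α : ℝ) x, N (α • x) = |α| * N x)
    (ha : ∀ x y, N (x + y) ≤ N x + N y) (x : E) : 0 ≤ N x := by
  have h1 : N (x + (-1 : ℝ) • x) ≤ N x + N ((-1 : ℝ) • x) := ha _ _
  have h2 : N ((-1 : ℝ) • x) = N x := by rw [hs]; simp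
  have h3 : x + (-1 : ℝ) • x = 0 := by simp
  rw [h3, aux_zero N hs, h2] at h1
  linarith

lemma aux_sum {ι : Type*} (ha : ∀ x y, N (x + y) ≤ N x + N y)
    (hs : ∀ (α : ℝ) x, N (α • x) = |α| * N x)
    (s : Finset ι) (f : ι → E) : N (∑ i ∈ s, f i) ≤ ∑ i ∈ s, N (f i) := by
  classical
  induction s using Finset.cons_induction with
  | empty => simp [aux_zero N hs]
  | cons a s has ih =>
      rw [Finset.sum_cons, Finset.sum_cons]
      exact le_trans (ha _ _) (by linarith)

lemma aux_upper (hs : ∀ (α : ℝ) x, N (α • x) = |α| * N x)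
    (ha : ∀ x y, N (x + y) ≤ N x + N y) :
    ∃ C > 0, ∀ x, N x ≤ C * ‖x‖ := by
  classical
  let b := Module.Basis.ofVectorSpace ℝ E
  let coordC : Module.Basis.ofVectorSpaceIndex ℝ E → (E →L[ℝ] ℝ) :=
    fun i => LinearMap.toContinuousLinearMap (b.coord i)
  refine ⟨1 + ∑ i, N (b i) * ‖coordC i‖, ?_, fun x => ?_⟩
  · have : (0:ℝ) ≤ ∑ i, N (b i) * ‖coordC i‖ :=
      Finset.sum_nonneg fun i _ => mul_nonneg (aux_nonneg N hs ha _) (norm_nonneg _)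
    linarith
  · have hx : x = ∑ i, b.repr x i • b i := (b.sum_repr x).symm
    calc N x = N (∑ i, b.repr x i • b i) := by rw [← hx]
      _ ≤ ∑ i, N (b.repr x i • b i) := aux_sum N ha hs _ _
      _ ≤ ∑ i, (N (b i) * ‖coordC i‖) * ‖x‖ := by
          refine Finset.sum_le_sum fun i _ => ?_
          rw [hs]
          have h1 : |b.repr x i| ≤ ‖coordC i‖ * ‖x‖ := by
            have := (coordC i).le_opNorm x
            simpa [coordC, Real.norm_eq_abs] using this
          calc |b.repr x i| * N (b i) ≤ (‖coordC i‖ * ‖x‖) * N (b i) :=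
                mul_le_mul_of_nonneg_right h1 (aux_nonneg N hs ha _)
            _ = (N (b i) * ‖coordC i‖) * ‖x‖ := by ring
      _ = (∑ i, N (b i) * ‖coordC i‖) * ‖x‖ := by rw [← Finset.sum_mul]
      _ ≤ (1 + ∑ i, N (b i) * ‖coordC i‖) * ‖x‖ := by
          have := norm_nonneg x; nlinarith [norm_nonneg x]

lemma aux_lower (h0 : ∀ x, N x = 0 → x = 0)
    (hs : ∀ (α : ℝ) x, N (α • x) = |α| * N x)
    (ha : ∀ x y, N (x + y) ≤ N x + N y) :
    ∃ c > 0, ∀ x, c * ‖x‖ ≤ N x := by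
  rcases subsingleton_or_nontrivial E with hE | hE
  · exact ⟨1, one_pos, fun x => by
      rw [Subsingleton.elim x 0]; simp [aux_zero N hs]⟩
  · obtain ⟨C, hC, hCle⟩ := aux_upper N hs ha
    have hcont : Continuous N := by
      rw [Metric.continuous_iff]
      intro x ε hε
      refine ⟨ε / C, by positivity, fun y hy => ?_⟩
      have key : ∀ u v : E, N u - N v ≤ C * ‖u - v‖ := by
        intro u v
        have := ha (u - v) v
        simp only [sub_add_cancel] at this
        have := hCle (u - v)
        linarith
      have h1 := key y x
      have h2 := key x y
      rw [Real.dist_eq]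
      rw [dist_eq_norm] at hy
      have hxy : ‖x - y‖ = ‖y - x‖ := by rw [norm_sub_rev]
      have hlt : C * ‖y - x‖ < ε := by
        have h3 := mul_lt_mul_of_pos_left hy hC
        rwa [mul_div_cancel₀ _ hC.ne'] at h3
      rw [abs_sub_lt_iff]
      constructor <;> nlinarith
    have hcomp : IsCompact (Metric.sphere (0:E) 1) := isCompact_sphere _ _
    have hne : (Metric.sphere (0:E) 1).Nonempty := by
      obtain ⟨x, hx⟩ := exists_norm_eq E (le_of_lt one_pos)
      exact ⟨x, by simpa [Metric.mem_sphere, dist_zero_right] using hx⟩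
    obtain ⟨x₀, hx₀mem, hx₀min⟩ := hcomp.exists_isMinOn hne (hcont.continuousOn)
    have hx₀norm : ‖x₀‖ = 1 := by simpa [Metric.mem_sphere, dist_zero_right] using hx₀mem
    have hx₀ne : x₀ ≠ 0 := by intro h; rw [h] at hx₀norm; simp at hx₀norm
    have hc : 0 < N x₀ := by
      rcases lt_or_eq_of_le (aux_nonneg N hs ha x₀) with h | h
      · exact h
      · exact absurd (h0 x₀ h.symm) hx₀ne
    refine ⟨N x₀, hc, fun x => ?_⟩
    rcases eq_or_ne x 0 with rfl | hx
    · simp [aux_zero N hs]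
    · have hnx : (0:ℝ) < ‖x‖ := norm_pos_iff.2 hx
      have hmem : (‖x‖⁻¹ • x) ∈ Metric.sphere (0:E) 1 := by
        simp [norm_smul, abs_of_pos (inv_pos.2 hnx), inv_mul_cancel₀ hnx.ne']
      have h1 : N x₀ ≤ N (‖x‖⁻¹ • x) := hx₀min hmem
      rw [hs] at h1
      rw [abs_of_pos (inv_pos.2 hnx)] at h1
      have h2 : ‖x‖ * N x₀ ≤ N x := by
        have h3 := mul_le_mul_of_nonneg_left h1 hnx.le
        rwa [← mul_assoc, mul_inv_cancel₀ hnx.ne', one_mul] at h3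
      linarith

/-- Two norms are equivalent. -/
lemma aux_equiv (N N' : E → ℝ)
    (h0 : ∀ x, N x = 0 → x = 0)
    (hs : ∀ (α : ℝ) x, N (α • x) = |α| * N x)
    (ha : ∀ x y, N (x + y) ≤ N x + N y)
    (hs' : ∀ (α : ℝ) x, N' (α • x) = |α| * N' x)
    (ha' : ∀ x y, N' (x + y) ≤ N' x + N' y) :
    ∃ C > 0, ∀ x, N' x ≤ C * N x := by
  obtain ⟨c, hc, hcl⟩ := aux_lower N h0 hs ha
  obtain ⟨C', hC', hC'u⟩ := aux_upper N' hs' ha'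
  refine ⟨C' / c, by positivity, fun x => ?_⟩
  have h1 := hcl x
  have h2 := hC'u x
  calc N' x ≤ C' * ‖x‖ := h2
    _ ≤ (C' / c) * N x := by
        rw [div_mul_eq_mul_div, le_div_iff₀ hc]
        nlinarith [norm_nonneg x]
end aux


/-- Gelfand formula for third order tensors: if a norm `N` satisfies
`N(A³) ≤ (N A)³` for the cubic power, then `m ↦ N(A^{3^m})^{1/3^m}` is
non-increasing, hence converges to its infimum (the Gelfand limit), and for any
other norm `N'` on the same space, `m ↦ N'(A^{3^m})^{1/3^m}` converges to the
same limit. -/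
theorem gelfand_limit_exists {d₁ d₂ d₃ : ℕ}
    (N : (Fin d₁ → Fin d₂ → Fin d₃ → ℝ) → ℝ)
    (hN_eq : ∀ A, N A = 0 → A = 0)
    (hN_smul : ∀ (α : ℝ) A, N (fun i j k => α * A i j k) = |α| * N A)
    (hN_add : ∀ A B, N (fun i j k => A i j k + B i j k) ≤ N A + N B)
    (hN_cube : ∀ A, N (cubicPow A) ≤ (N A) ^ 3)
    (N' : (Fin d₁ → Fin d₂ → Fin d₃ → ℝ) → ℝ)
    (hN'_eq : ∀ A, N' A = 0 → A = 0)
    (hN'_smul : ∀ (α : ℝ) A, N' (fun i j k => α * A i j k) = |α| * N' A)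
    (hN'_add : ∀ A B, N' (fun i j k => A i j k + B i j k) ≤ N' A + N' B)
    (A : Fin d₁ → Fin d₂ → Fin d₃ → ℝ) :
    Antitone (fun m : ℕ => (N (cubicPow^[m] A)) ^ ((1 : ℝ) / 3 ^ m)) ∧
    Filter.Tendsto (fun m : ℕ => (N (cubicPow^[m] A)) ^ ((1 : ℝ) / 3 ^ m))
      Filter.atTop (nhds (⨅ m : ℕ, (N (cubicPow^[m] A)) ^ ((1 : ℝ) / 3 ^ m))) ∧
    Filter.Tendsto (fun m : ℕ => (N' (cubicPow^[m] A)) ^ ((1 : ℝ) / 3 ^ m))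
      Filter.atTop (nhds (⨅ m : ℕ, (N (cubicPow^[m] A)) ^ ((1 : ℝ) / 3 ^ m))) := by
  -- restate axioms in bundled form
  have hs : ∀ (α : ℝ) x, N (α • x) = |α| * N x := fun α x => hN_smul α x
  have ha : ∀ x y, N (x + y) ≤ N x + N y := fun x y => hN_add x y
  have hs' : ∀ (α : ℝ) x, N' (α • x) = |α| * N' x := fun α x => hN'_smul α x
  have ha' : ∀ x y, N' (x + y) ≤ N' x + N' y := fun x y => hN'_add x y
  have hNn : ∀ x, 0 ≤ N x := aux_nonneg N hs ha
  have hN'n : ∀ x, 0 ≤ N' x := aux_nonneg N' hs' ha'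
  set B : ℕ → (Fin d₁ → Fin d₂ → Fin d₃ → ℝ) := fun m => cubicPow^[m] A with hB
  set a : ℕ → ℝ := fun m => (N (B m)) ^ ((1 : ℝ) / 3 ^ m) with haa
  have han : ∀ m, 0 ≤ a m := fun m => Real.rpow_nonneg (hNn _) _
  have hkey : ∀ m, N (B (m + 1)) ≤ (N (B m)) ^ 3 := by
    intro m
    have : B (m + 1) = cubicPow (B m) := Function.iterate_succ_apply' _ _ _
    rw [this]
    exact hN_cube _
  have hanti : Antitone a := by
    apply antitone_nat_of_succ_le
    intro m
    have h1 : a (m + 1) ≤ ((N (B m)) ^ 3) ^ ((1 : ℝ) / 3 ^ (m + 1)) :=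
      Real.rpow_le_rpow (hNn _) (hkey m) (by positivity)
    have h2 : ((N (B m)) ^ 3) ^ ((1 : ℝ) / 3 ^ (m + 1)) = a m := by
      rw [← Real.rpow_natCast (N (B m)) 3, ← Real.rpow_mul (hNn _)]
      congr 1
      rw [pow_succ]
      push_cast
      field_simp
    rw [h2] at h1
    exact h1
  have hbdd : BddBelow (Set.range a) := ⟨0, fun x ⟨m, hm⟩ => hm ▸ han m⟩
  have htend : Filter.Tendsto a Filter.atTop (nhds (⨅ m, a m)) :=
    tendsto_atTop_ciInf hanti hbdd
  refine ⟨hanti, htend, ?_⟩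
  -- norm equivalence
  obtain ⟨C, hC, hCle⟩ := aux_equiv N N' hN_eq hs ha hs' ha'
  obtain ⟨c', hc', hc'le⟩ := aux_equiv N' N hN'_eq hs' ha' hs ha
  set c : ℝ := c'⁻¹ with hcdef
  have hcpos : 0 < c := inv_pos.2 hc'
  have hclow : ∀ x, c * N x ≤ N' x := by
    intro x
    have := hc'le x
    rw [hcdef, inv_mul_le_iff₀ hc']
    linarith
  -- squeeze
  have hexp : Filter.Tendsto (fun m : ℕ => (1 : ℝ) / 3 ^ m) Filter.atTop (nhds 0) := by
    simp only [one_div, ← inv_pow]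
    exact tendsto_pow_atTop_nhds_zero_of_lt_one (by norm_num) (by norm_num)
  have hctend : Filter.Tendsto (fun m : ℕ => c ^ ((1 : ℝ) / 3 ^ m)) Filter.atTop (nhds 1) := by
    have := Filter.Tendsto.rpow (tendsto_const_nhds (x := c) (f := Filter.atTop (α := ℕ)))
      hexp (Or.inl hcpos.ne')
    simpa using this
  have hCtend : Filter.Tendsto (fun m : ℕ => C ^ ((1 : ℝ) / 3 ^ m)) Filter.atTop (nhds 1) := by
    have := Filter.Tendsto.rpow (tendsto_const_nhds (x := C) (f := Filter.atTop (α := ℕ)))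
      hexp (Or.inl hC.ne')
    simpa using this
  set L := ⨅ m, a m with hL
  have hlowt : Filter.Tendsto (fun m : ℕ => c ^ ((1 : ℝ) / 3 ^ m) * a m)
      Filter.atTop (nhds L) := by
    have := hctend.mul htend
    simpa using this
  have hupt : Filter.Tendsto (fun m : ℕ => C ^ ((1 : ℝ) / 3 ^ m) * a m)
      Filter.atTop (nhds L) := by
    have := hCtend.mul htend
    simpa using this
  refine tendsto_of_tendsto_of_tendsto_of_le_of_le hlowt hupt ?_ ?_
  · intro m
    have h1 : c * N (B m) ≤ N' (B m) := hclow _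
    have h2 : (c * N (B m)) ^ ((1:ℝ)/3^m) ≤ (N' (B m)) ^ ((1:ℝ)/3^m) :=
      Real.rpow_le_rpow (mul_nonneg hcpos.le (hNn _)) h1 (by positivity)
    rwa [Real.mul_rpow hcpos.le (hNn _)] at h2
  · intro m
    have h1 : N' (B m) ≤ C * N (B m) := hCle _
    have h2 : (N' (B m)) ^ ((1:ℝ)/3^m) ≤ (C * N (B m)) ^ ((1:ℝ)/3^m) :=
      Real.rpow_le_rpow (hN'n _) h1 (by positivity)
    rwa [Real.mul_rpow hC.le (hNn _)] at h2
end
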